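/- Let H and 𝓗 be as follows: for each parameter t, H_t is self-adjoint on 𝓗_t, A_t ∈ 𝓑(𝓗_t) is self-adjoint with ‖A_t‖ uniformly bounded, and J_t ∈ 𝓑(𝓗_{t̃}, 𝓗_t) satisfies J_t* J_t = I, ‖(I − J_t J_t*)(H_t − z)^{-1}‖ → 0, ‖J_t (H_{t̃} − z)^{-1} − (H_t − z)^{-1} J_t‖ → 0, and ‖J_t A_{t̃} − A_t J_t‖ → 0 as t → t̃, for each non-real z. Then ‖(I − J_t J_t*)(H_t + A_t − z)^{-1}‖ → 0 and ‖J_t (H_{t̃} + A_{t̃} − z)^{-1} − (H_t + A_t − z)^{-1} J_t‖ → 0 as t → t̃, for each non-real z. -/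

import Mathlib

open Filter
open scoped ComplexConjugate

/-- `R` is the resolvent `(T − z)⁻¹` of the (possibly unbounded) operator `T`. -/
def IsResolvent {E : Type*} [NormedAddCommGroup E] [InnerProductSpace ℂ E]
    (T : E →ₗ.[ℂ] E) (z : ℂ) (R : E →L[ℂ] E) : Prop :=
  (∀ x : E, ∃ hx : R x ∈ T.domain, T ⟨R x, hx⟩ - z • R x = x) ∧
  (∀ y : T.domain, R (T y - z • (y : E)) = (y : E))

/-- The sum `T + A` of an unbounded operator `T` and a bounded operator `A`,
defined on the domain of `T`. -/
def pAdd {E : Type*} [NormedAddCommGroup E] [InnerProductSpace ℂ E]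
    (T : E →ₗ.[ℂ] E) (A : E →L[ℂ] E) : E →ₗ.[ℂ] E :=
  ⟨T.domain, T.toFun + (A : E →ₗ[ℂ] E).comp T.domain.subtype⟩

section Aux
variable {E : Type*} [NormedAddCommGroup E] [InnerProductSpace ℂ E]

lemma pAdd_apply' (T : E →ₗ.[ℂ] E) (A : E →L[ℂ] E) (y : T.domain) :
    pAdd T A y = T y + A y := rfl

lemma resL1 {T : E →ₗ.[ℂ] E} {A : E →L[ℂ] E} {z : ℂ} {R R' : E →L[ℂ] E}
    (hR : IsResolvent T z R) (hR' : IsResolvent (pAdd T A) z R') (x : E) :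
    R' x = R x - R (A (R' x)) := by
  obtain ⟨hx, heq⟩ := hR'.1 x
  have h2 := hR.2 ⟨R' x, hx⟩
  have h3 : T ⟨R' x, hx⟩ + A (R' x) - z • R' x = x := heq
  have heq' : T ⟨R' x, hx⟩ - z • R' x = x - A (R' x) := by
    rw [eq_sub_iff_add_eq]
    calc T ⟨R' x, hx⟩ - z • R' x + A (R' x)
        = T ⟨R' x, hx⟩ + A (R' x) - z • R' x := by abel
      _ = x := h3
  rw [heq'] at h2
  have h2' : R (x - A (R' x)) = R' x := h2
  rw [← map_sub]; exact h2'.symm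

lemma resL2 {T : E →ₗ.[ℂ] E} {A : E →L[ℂ] E} {z : ℂ} {R R' : E →L[ℂ] E}
    (hR : IsResolvent T z R) (hR' : IsResolvent (pAdd T A) z R') (x : E) :
    R x = R' x + R' (A (R x)) := by
  obtain ⟨hx, heq⟩ := hR.1 x
  have h2 := hR'.2 ⟨R x, hx⟩
  have heq' : pAdd T A ⟨R x, hx⟩ - z • R x = x + A (R x) := by
    calc pAdd T A ⟨R x, hx⟩ - z • R x
        = T ⟨R x, hx⟩ - z • R x + A (R x) := by change T ⟨R x, hx⟩ + A (R x) - z • R x = _; abel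
      _ = x + A (R x) := by rw [heq]
  rw [heq'] at h2
  have h2' : R' (x + A (R x)) = R x := h2
  rw [← map_add]; exact h2'.symm

lemma pAdd_inner_im {T : E →ₗ.[ℂ] E} {A : E →L[ℂ] E}
    (hT : ∀ u : T.domain, (inner ℂ ((u : E)) (T u) : ℂ).im = 0)
    (hA : ∀ u : E, (inner ℂ u (A u) : ℂ).im = 0)
    (u : (pAdd T A).domain) : (inner ℂ ((u : E)) (pAdd T A u) : ℂ).im = 0 := by
  have h : (pAdd T A) u = T u + A (u : E) := rfl
  rw [h, inner_add_right, Complex.add_im, hT u, hA (u : E)]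
  norm_num

lemma resolvent_bound {T : E →ₗ.[ℂ] E}
    (hsym : ∀ u : T.domain, (inner ℂ ((u : E)) (T u) : ℂ).im = 0)
    {z : ℂ} (hz : z.im ≠ 0) {R : E →L[ℂ] E} (hR : IsResolvent T z R) :
    ‖R‖ ≤ |z.im|⁻¹ := by
  have hzim : (0:ℝ) < |z.im| := abs_pos.mpr hz
  apply ContinuousLinearMap.opNorm_le_bound _ (by positivity)
  intro x
  obtain ⟨hx, heq⟩ := hR.1 x
  have hinner : (inner ℂ (R x) x : ℂ) = inner ℂ (R x) (T ⟨R x, hx⟩) - z * (‖R x‖:ℂ)^2 := by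
    have h' := congrArg (fun y => (inner ℂ (R x) y : ℂ)) heq
    simp only [inner_sub_right, inner_smul_right, inner_self_eq_norm_sq_to_K] at h'
    exact h'.symm
  have him : (inner ℂ (R x) x : ℂ).im = - (z.im * ‖R x‖^2) := by
    have h0 : (inner ℂ (R x) (T ⟨R x, hx⟩) : ℂ).im = 0 := hsym ⟨R x, hx⟩
    rw [hinner, Complex.sub_im, h0, Complex.mul_im]
    simp only [← Complex.ofReal_pow, Complex.ofReal_im, Complex.ofReal_re]
    ring
  have h1 : |z.im| * ‖R x‖^2 ≤ ‖R x‖ * ‖x‖ := by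
    have habs : |(inner ℂ (R x) x : ℂ).im| ≤ ‖(inner ℂ (R x) x : ℂ)‖ := Complex.abs_im_le_norm _
    have habs' : |(inner ℂ (R x) x : ℂ).im| = |z.im| * ‖R x‖^2 := by
      rw [him, abs_neg, abs_mul, abs_of_nonneg (sq_nonneg ‖R x‖)]
    rw [← habs']
    exact habs.trans (norm_inner_le_norm _ _)
  by_cases hy : ‖R x‖ = 0
  · rw [hy]; positivity
  · have hy' : 0 < ‖R x‖ := lt_of_le_of_ne (norm_nonneg _) (Ne.symm hy)
    have key : |z.im| * ‖R x‖ ≤ ‖x‖ := by nlinarith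
    rw [← mul_le_mul_iff_right₀ hzim, ← mul_assoc, mul_inv_cancel₀ (ne_of_gt hzim), one_mul]
    exact key

end Aux

section Aux2
variable {E : Type*} [NormedAddCommGroup E] [InnerProductSpace ℂ E] [CompleteSpace E]

lemma clm_inner_im {A : E →L[ℂ] E} (hA : IsSelfAdjoint A) (u : E) :
    (inner ℂ u (A u) : ℂ).im = 0 := by
  have h : (inner ℂ (A u) u : ℂ) = inner ℂ u (A u) := hA.isSymmetric u u
  have hc : conj (inner ℂ u (A u) : ℂ) = inner ℂ u (A u) := by
    rw [inner_conj_symm (A u) u]; exact h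
  exact Complex.conj_eq_iff_im.mp hc

lemma pmap_inner_im {T : E →ₗ.[ℂ] E} (hT : IsSelfAdjoint T)
    (u : T.domain) : (inner ℂ ((u : E)) (T u) : ℂ).im = 0 := by
  have hd := hT.dense_domain
  have hfa := LinearPMap.adjoint_isFormalAdjoint (T := T) hd
  rw [LinearPMap.isSelfAdjoint_def] at hT
  rw [hT] at hfa
  have h := hfa u u
  have hc : conj (inner ℂ ((u : E)) (T u) : ℂ) = inner ℂ ((u : E)) (T u) := by
    rw [inner_conj_symm (T u) ((u : E))]; exact h
  exact Complex.conj_eq_iff_im.mp hc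

end Aux2

section Key
variable {E F : Type*} [NormedAddCommGroup E] [InnerProductSpace ℂ E]
  [NormedAddCommGroup F] [InnerProductSpace ℂ F]

lemma key1 {T : F →ₗ.[ℂ] F} {At : F →L[ℂ] F} {z : ℂ} {Rt R't : F →L[ℂ] F}
    (hRt : IsResolvent T z Rt) (hR't : IsResolvent (pAdd T At) z R't)
    (Q : F →L[ℂ] F) {εi C : ℝ} (hCb : ‖At‖ ≤ C) (hR'tb : ‖R't‖ ≤ εi)
    (hεi : 0 ≤ εi) (hC0 : 0 ≤ C) :
    ‖Q.comp R't‖ ≤ ‖Q.comp Rt‖ * (1 + C * εi) := by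
  apply ContinuousLinearMap.opNorm_le_bound _
    (mul_nonneg (norm_nonneg _) (add_nonneg zero_le_one (mul_nonneg hC0 hεi)))
  intro x
  have hL1x : R't x = Rt x - Rt (At (R't x)) := resL1 hRt hR't x
  have h1 : (Q.comp R't) x = (Q.comp Rt) (x - At (R't x)) := by
    simp only [ContinuousLinearMap.comp_apply]
    exact congrArg Q (by rw [map_sub]; exact hL1x)
  have h4 : ‖R't x‖ ≤ εi * ‖x‖ :=
    (ContinuousLinearMap.le_opNorm _ _).trans
      (mul_le_mul_of_nonneg_right hR'tb (norm_nonneg x))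
  have h3 : ‖At (R't x)‖ ≤ C * (εi * ‖x‖) :=
    (ContinuousLinearMap.le_opNorm _ _).trans
      (mul_le_mul hCb h4 (norm_nonneg _) hC0)
  calc ‖(Q.comp R't) x‖ = ‖(Q.comp Rt) (x - At (R't x))‖ := by rw [h1]
    _ ≤ ‖Q.comp Rt‖ * ‖x - At (R't x)‖ := ContinuousLinearMap.le_opNorm _ _
    _ ≤ ‖Q.comp Rt‖ * (‖x‖ + C * (εi * ‖x‖)) := by
        refine mul_le_mul_of_nonneg_left ?_ (norm_nonneg _)
        refine (norm_sub_le _ _).trans ?_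
        linarith
    _ = ‖Q.comp Rt‖ * (1 + C * εi) * ‖x‖ := by ring

lemma key2 {T : F →ₗ.[ℂ] F} {Tl : E →ₗ.[ℂ] E} {At : F →L[ℂ] F} {Al : E →L[ℂ] E}
    {z : ℂ} {Rt R't : F →L[ℂ] F} {Rl R'l : E →L[ℂ] E} (Jt : E →L[ℂ] F)
    (hRt : IsResolvent T z Rt) (hR't : IsResolvent (pAdd T At) z R't)
    (hRl : IsResolvent Tl z Rl) (hR'l : IsResolvent (pAdd Tl Al) z R'l)
    {εi C : ℝ} (hCb : ‖At‖ ≤ C)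
    (hRtb : ‖Rt‖ ≤ εi) (hR'tb : ‖R't‖ ≤ εi) (hR'lb : ‖R'l‖ ≤ εi)
    (hεi : 0 ≤ εi) (hC0 : 0 ≤ C) :
    ‖Jt.comp R'l - R't.comp Jt‖ ≤
      (1 + εi * C) * (‖Jt.comp Rl - Rt.comp Jt‖ * (1 + ‖Al‖ * εi) +
        εi * (‖Jt.comp Al - At.comp Jt‖ * εi)) := by
  apply ContinuousLinearMap.opNorm_le_bound _
    (mul_nonneg (add_nonneg zero_le_one (mul_nonneg hεi hC0))
      (add_nonneg
        (mul_nonneg (norm_nonneg _)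
          (add_nonneg zero_le_one (mul_nonneg (norm_nonneg _) hεi)))
        (mul_nonneg hεi (mul_nonneg (norm_nonneg _) hεi))))
  intro x
  have e1 : ∀ y : E, ‖Jt (Rl y) - Rt (Jt y)‖ ≤ ‖Jt.comp Rl - Rt.comp Jt‖ * ‖y‖ := fun y => by
    simpa only [ContinuousLinearMap.sub_apply, ContinuousLinearMap.comp_apply] using
      ContinuousLinearMap.le_opNorm (Jt.comp Rl - Rt.comp Jt) y
  have e2 : ∀ y : E, ‖Jt (Al y) - At (Jt y)‖ ≤ ‖Jt.comp Al - At.comp Jt‖ * ‖y‖ := fun y => by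
    simpa only [ContinuousLinearMap.sub_apply, ContinuousLinearMap.comp_apply] using
      ContinuousLinearMap.le_opNorm (Jt.comp Al - At.comp Jt) y
  have hL1v : R't (Jt x) = Rt (Jt x) - Rt (At (R't (Jt x))) := resL1 hRt hR't (Jt x)
  have hL1l : R'l x = Rl x - Rl (Al (R'l x)) := resL1 hRl hR'l x
  have hJw : Jt (R'l x) = Jt (Rl x) - Jt (Rl (Al (R'l x))) := by
    conv_lhs => rw [hL1l]
    exact map_sub Jt _ _
  have hRv : Rt (Jt x) = R't (Jt x) + Rt (At (R't (Jt x))) := (eq_sub_iff_add_eq.mp hL1v).symm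
  simp only [ContinuousLinearMap.sub_apply, ContinuousLinearMap.comp_apply]
  set u := Jt (R'l x) - R't (Jt x) with hu
  set S := ((Jt (Rl x) - Rt (Jt x)) - Rt (Jt (Al (R'l x)) - At (Jt (R'l x)))) -
    (Jt (Rl (Al (R'l x))) - Rt (Jt (Al (R'l x)))) with hS
  have claim1 : u + Rt (At u) = S := by
    rw [hS, hu]
    simp only [map_sub]
    rw [hJw, hRv]
    abel
  have hL2Au : Rt (At u) = R't (At u) + R't (At (Rt (At u))) := resL2 hRt hR't (At u)
  have claim2 : (u + Rt (At u)) - R't (At (u + Rt (At u))) = u := by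
    rw [map_add At u (Rt (At u)), map_add R't (At u) (At (Rt (At u))), ← hL2Au]
    abel
  have final : u = S - R't (At S) := by
    conv_lhs => rw [← claim2, claim1]
  have hwb : ‖R'l x‖ ≤ εi * ‖x‖ :=
    (ContinuousLinearMap.le_opNorm _ _).trans
      (mul_le_mul_of_nonneg_right hR'lb (norm_nonneg x))
  have hd2 : ‖Jt (Al (R'l x)) - At (Jt (R'l x))‖ ≤ ‖Jt.comp Al - At.comp Jt‖ * (εi * ‖x‖) :=
    (e2 (R'l x)).trans (mul_le_mul_of_nonneg_left hwb (norm_nonneg _))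
  have hY : ‖Rt (Jt (Al (R'l x)) - At (Jt (R'l x)))‖ ≤
      εi * (‖Jt.comp Al - At.comp Jt‖ * (εi * ‖x‖)) :=
    (ContinuousLinearMap.le_opNorm _ _).trans
      (mul_le_mul hRtb hd2 (norm_nonneg _) hεi)
  have hAlw : ‖Al (R'l x)‖ ≤ ‖Al‖ * (εi * ‖x‖) :=
    (ContinuousLinearMap.le_opNorm _ _).trans
      (mul_le_mul_of_nonneg_left hwb (norm_nonneg Al))
  have hZ : ‖Jt (Rl (Al (R'l x))) - Rt (Jt (Al (R'l x)))‖ ≤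
      ‖Jt.comp Rl - Rt.comp Jt‖ * (‖Al‖ * (εi * ‖x‖)) :=
    (e1 (Al (R'l x))).trans (mul_le_mul_of_nonneg_left hAlw (norm_nonneg _))
  have n1 : ‖S‖ ≤ ‖Jt.comp Rl - Rt.comp Jt‖ * ‖x‖ +
      εi * (‖Jt.comp Al - At.comp Jt‖ * (εi * ‖x‖)) +
      ‖Jt.comp Rl - Rt.comp Jt‖ * (‖Al‖ * (εi * ‖x‖)) := by
    rw [hS]
    have t1 := norm_sub_le ((Jt (Rl x) - Rt (Jt x)) -
      Rt (Jt (Al (R'l x)) - At (Jt (R'l x)))) (Jt (Rl (Al (R'l x))) - Rt (Jt (Al (R'l x))))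
    have t2 := norm_sub_le (Jt (Rl x) - Rt (Jt x)) (Rt (Jt (Al (R'l x)) - At (Jt (R'l x))))
    have t3 := e1 x
    linarith
  have hAtS : ‖At S‖ ≤ C * ‖S‖ :=
    (ContinuousLinearMap.le_opNorm _ _).trans
      (mul_le_mul_of_nonneg_right hCb (norm_nonneg S))
  have n2 : ‖u‖ ≤ ‖S‖ + εi * (C * ‖S‖) := by
    rw [final]
    refine (norm_sub_le _ _).trans ?_
    have : ‖R't (At S)‖ ≤ εi * (C * ‖S‖) :=
      (ContinuousLinearMap.le_opNorm _ _).trans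
        (mul_le_mul hR'tb hAtS (norm_nonneg _) hεi)
    linarith
  have hSnn : (0:ℝ) ≤ ‖S‖ := norm_nonneg S
  calc ‖u‖ ≤ ‖S‖ + εi * (C * ‖S‖) := n2
    _ = (1 + εi * C) * ‖S‖ := by ring
    _ ≤ (1 + εi * C) * (‖Jt.comp Rl - Rt.comp Jt‖ * ‖x‖ +
          εi * (‖Jt.comp Al - At.comp Jt‖ * (εi * ‖x‖)) +
          ‖Jt.comp Rl - Rt.comp Jt‖ * (‖Al‖ * (εi * ‖x‖))) := by
        refine mul_le_mul_of_nonneg_left n1 ?_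
        nlinarith
    _ = (1 + εi * C) * (‖Jt.comp Rl - Rt.comp Jt‖ * (1 + ‖Al‖ * εi) +
          εi * (‖Jt.comp Al - At.comp Jt‖ * εi)) * ‖x‖ := by ring

end Key

/-- Generalized norm resolvent convergence is preserved under uniformly bounded
self-adjoint bounded perturbations `A_t` that are asymptotically intertwined by
the identification operators `J_t`.  Here `H_t` (on `𝓗_t = F t`) and `Hlim`
(on `𝓗_{t̃} = E`) are self-adjoint with resolvents `R t z`, `Rlim z`, the
perturbed operators `H_t + A_t`, `Hlim + Alim` have resolvents `R' t z`, `R'lim z`,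
and `t → t̃` is modeled by an arbitrary filter `l`. -/
theorem stmt_15 {ι : Type*} (l : Filter ι)
    (F : ι → Type*) [∀ t, NormedAddCommGroup (F t)] [∀ t, InnerProductSpace ℂ (F t)]
    [∀ t, CompleteSpace (F t)]
    {E : Type*} [NormedAddCommGroup E] [InnerProductSpace ℂ E] [CompleteSpace E]
    (H : ∀ t, F t →ₗ.[ℂ] F t) (hH : ∀ t, IsSelfAdjoint (H t))
    (Hlim : E →ₗ.[ℂ] E) (hHlim : IsSelfAdjoint Hlim)
    (R : ∀ t, ℂ → (F t →L[ℂ] F t))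
    (hR : ∀ t, ∀ z : ℂ, z.im ≠ 0 → IsResolvent (H t) z (R t z))
    (Rlim : ℂ → (E →L[ℂ] E))
    (hRlim : ∀ z : ℂ, z.im ≠ 0 → IsResolvent Hlim z (Rlim z))
    (A : ∀ t, F t →L[ℂ] F t) (hA : ∀ t, IsSelfAdjoint (A t))
    (Alim : E →L[ℂ] E) (hAlim : IsSelfAdjoint Alim)
    (hAbd : ∃ C : ℝ, ∀ᶠ t in l, ‖A t‖ ≤ C)
    (J : ∀ t, E →L[ℂ] F t)
    (hJ : ∀ t, (ContinuousLinearMap.adjoint (J t)).comp (J t) = 1)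
    (hres1 : ∀ z : ℂ, z.im ≠ 0 → Tendsto
      (fun t => ‖(1 - (J t).comp (ContinuousLinearMap.adjoint (J t))).comp (R t z)‖)
      l (nhds 0))
    (hres2 : ∀ z : ℂ, z.im ≠ 0 → Tendsto
      (fun t => ‖(J t).comp (Rlim z) - (R t z).comp (J t)‖) l (nhds 0))
    (hAconv : Tendsto (fun t => ‖(J t).comp Alim - (A t).comp (J t)‖) l (nhds 0))
    (R' : ∀ t, ℂ → (F t →L[ℂ] F t))
    (hR' : ∀ t, ∀ z : ℂ, z.im ≠ 0 → IsResolvent (pAdd (H t) (A t)) z (R' t z))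
    (R'lim : ℂ → (E →L[ℂ] E))
    (hR'lim : ∀ z : ℂ, z.im ≠ 0 → IsResolvent (pAdd Hlim Alim) z (R'lim z)) :
    ∀ z : ℂ, z.im ≠ 0 →
      Tendsto
        (fun t => ‖(1 - (J t).comp (ContinuousLinearMap.adjoint (J t))).comp (R' t z)‖)
        l (nhds 0) ∧
      Tendsto (fun t => ‖(J t).comp (R'lim z) - (R' t z).comp (J t)‖) l (nhds 0) := by
  intro z hz
  set εi : ℝ := |z.im|⁻¹ with hεidef
  have hεi : (0:ℝ) ≤ εi := by positivity
  obtain ⟨C₀, hC₀⟩ := hAbd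
  set C : ℝ := max C₀ 0 with hCdef
  have hC : ∀ᶠ t in l, ‖A t‖ ≤ C := hC₀.mono fun t h => h.trans (le_max_left _ _)
  have hC0 : (0:ℝ) ≤ C := le_max_right _ _
  have hRb : ∀ t, ‖R t z‖ ≤ εi := fun t =>
    resolvent_bound (pmap_inner_im (hH t)) hz (hR t z hz)
  have hR'b : ∀ t, ‖R' t z‖ ≤ εi := fun t =>
    resolvent_bound (pAdd_inner_im (pmap_inner_im (hH t)) (clm_inner_im (hA t))) hz
      (hR' t z hz)
  have hR'lb : ‖R'lim z‖ ≤ εi :=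
    resolvent_bound (pAdd_inner_im (pmap_inner_im hHlim) (clm_inner_im hAlim)) hz
      (hR'lim z hz)
  constructor
  · refine squeeze_zero' (Eventually.of_forall fun t => norm_nonneg _)
      (hC.mono fun t ht =>
        key1 (hR t z hz) (hR' t z hz) _ ht (hR'b t) hεi hC0) ?_
    have h := (hres1 z hz).mul_const (1 + C * εi)
    simpa using h
  · refine squeeze_zero' (Eventually.of_forall fun t => norm_nonneg _)
      (hC.mono fun t ht =>
        key2 (J t) (hR t z hz) (hR' t z hz) (hRlim z hz) (hR'lim z hz) ht
          (hRb t) (hR'b t) hR'lb hεi hC0) ?_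
    have h1 := (hres2 z hz).mul_const (1 + ‖Alim‖ * εi)
    have h2 := ((hAconv).mul_const εi).const_mul εi
    have h3 := (h1.add h2).const_mul (1 + εi * C)
    simpa using h3
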